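/- Let $x> 0$ and define the sequence $a_k$ by $a_0=1$, $a_1 = 3/2 + x/2$, and for $k\geq 2$, $a_k = \left(1+\frac{x+1}{k+1}\right)a_{k-1} - \frac{x}{k}a_{k-2}$. Then $a_k = (k+2)\, x^{-2}\, e_2^{(k+2)}(x)$ for all $k\geq 0$, where $e_2^{(n)}(x) = \sum_{i=2}^{n} x^i/i!$. -/

import Mathlib

/-- The partial sum `e_m⁽ⁿ⁾(x) = ∑_{i=m}^n xⁱ/i!` of the exponential series. -/
noncomputable def expPartialFrom (m n : ℕ) (x : ℝ) : ℝ :=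
  ∑ i ∈ Finset.Icc m n, x ^ i / (Nat.factorial i)

/-- If `a₀ = 1`, `a₁ = 3/2 + x/2` and `aₖ = (1 + (x+1)/(k+1)) aₖ₋₁ - (x/k) aₖ₋₂`
for `k ≥ 2`, then `aₖ = (k+2) x⁻² e₂⁽ᵏ⁺²⁾(x)` for all `k ≥ 0`. -/
theorem recurrence_e2_partial (x : ℝ) (hx : 0 < x) (a : ℕ → ℝ)
    (h0 : a 0 = 1) (h1 : a 1 = 3 / 2 + x / 2)
    (hrec : ∀ k, 2 ≤ k →
      a k = (1 + (x + 1) / (k + 1)) * a (k - 1) - x / k * a (k - 2)) :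
    ∀ k, a k = (k + 2) * x⁻¹ ^ 2 * expPartialFrom 2 (k + 2) x := by
  have hx0 : x ≠ 0 := ne_of_gt hx
  have hstep : ∀ n : ℕ, 2 ≤ n → expPartialFrom 2 (n + 1) x
      = expPartialFrom 2 n x + x ^ (n + 1) / (Nat.factorial (n + 1)) := by
    intro n hn
    rw [expPartialFrom, expPartialFrom, Finset.sum_Icc_succ_top (by omega)]
  have key : ∀ k, a k = (k + 2) * x⁻¹ ^ 2 * expPartialFrom 2 (k + 2) x ∧
      a (k + 1) = ((k + 1 : ℕ) + 2) * x⁻¹ ^ 2 * expPartialFrom 2 (k + 1 + 2) x := by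
    intro k
    induction k with
    | zero =>
      constructor
      · have : expPartialFrom 2 2 x = x ^ 2 / 2 := by
          simp [expPartialFrom, Finset.Icc_self, Nat.factorial]
        rw [h0, this]
        field_simp
        norm_num
      · have : expPartialFrom 2 3 x = x ^ 2 / 2 + x ^ 3 / 6 := by
          rw [show (3:ℕ) = 2 + 1 from rfl, hstep 2 le_rfl]
          simp [expPartialFrom, Finset.Icc_self, Nat.factorial]
        rw [h1, this]
        push_cast
        field_simp
        ring
    | succ k ih =>
      obtain ⟨ih0, ih1⟩ := ih
      refine ⟨ih1, ?_⟩
      have hr := hrec (k + 2) (by omega)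
      simp only [show k + 2 - 1 = k + 1 from rfl, show k + 2 - 2 = k from rfl] at hr
      rw [hr, ih0, ih1]
      have e3 := hstep (k + 3) (by omega)
      have e2 := hstep (k + 2) (by omega)
      rw [show k + 1 + 1 + 2 = k + 3 + 1 from rfl, e3,
        show k + 1 + 2 = k + 2 + 1 from rfl, e2]
      have hf3 : (Nat.factorial (k + 3 + 1) : ℝ) = (k + 4) * Nat.factorial (k + 3) := by
        rw [Nat.factorial_succ]; push_cast; ring
      have hf2 : (Nat.factorial (k + 2 + 1) : ℝ) = (k + 3) * Nat.factorial (k + 2) := by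
        rw [Nat.factorial_succ]; push_cast; ring
      have hfk2 : (Nat.factorial (k + 2) : ℝ) ≠ 0 := by positivity
      have hfk3 : (Nat.factorial (k + 3) : ℝ) ≠ 0 := by
        rw [show k + 3 = k + 2 + 1 from rfl, hf2]; positivity
      rw [hf3, hf2]
      push_cast
      field_simp
      ring
  exact fun k => (key k).1
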